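/- For any distinct i, j, k ∈ {1,2,3}, letting L be the subgroup of A generated by {eᵢ + eⱼ, mᵢ + mⱼ, eₖ}, each of φᵢⱼ, φⱼₖ and φᵢₖ maps L onto L; i.e. all three S-domain walls condense on the fold|e-boundary (eᵢeⱼ, mᵢmⱼ, eₖ). -/
import Mathlib


/-- The group of topological excitations of three copies of the 3D toric code:
pairs (a, b) of electric/magnetic labels in `(ZMod 2)³`. -/
abbrev A : Type := (Fin 3 → ZMod 2) × (Fin 3 → ZMod 2)

/-- The electric charge `eᵢ`. -/
def e (i : Fin 3) : A := (Pi.single i 1, 0)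

/-- The magnetic flux `mᵢ`. -/
def m (i : Fin 3) : A := (0, Pi.single i 1)

/-- The mutual-statistics pairing `ω((a,b),(a',b')) = a·b' + a'·b`. -/
def ω (x y : A) : ZMod 2 :=
  (∑ t, x.1 t * y.2 t) + (∑ t, y.1 t * x.2 t)

/-- The action of the S-domain wall `s⁽²⁾ᵢⱼ` on excitations:
`(a, b) ↦ (a + bⱼ•δᵢ + bᵢ•δⱼ, b)`. -/
def φ (i j : Fin 3) (x : A) : A :=
  (x.1 + x.2 j • (Pi.single i 1 : Fin 3 → ZMod 2) + x.2 i • (Pi.single j 1 : Fin 3 → ZMod 2), x.2)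

/-- A subgroup `L` of `A` is Lagrangian if it equals its orthogonal complement
with respect to the pairing `ω`. -/
def IsLagrangian (L : AddSubgroup A) : Prop :=
  (L : Set A) = {x : A | ∀ l ∈ L, ω x l = 0}

/-- `φ i j` bundled as an additive monoid hom. -/
def Φ (i j : Fin 3) : A →+ A where
  toFun := φ i j
  map_zero' := by simp [φ]
  map_add' x y := by
    ext t <;> simp [φ, add_smul] <;> ring

lemma phi_invol (i j : Fin 3) (x : A) : φ i j (φ i j x) = x := by
  ext t
  · simp [φ]; ring_nf
    simp [show (2:ZMod 2) = 0 from rfl]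
  · simp [φ]

lemma phi_image_eq (i j : Fin 3)
    (L : AddSubgroup A) (h : ∀ x ∈ L, φ i j x ∈ L) :
    φ i j '' (L : Set A) = (L : Set A) := by
  apply Set.Subset.antisymm
  · rintro _ ⟨x, hx, rfl⟩; exact h x hx
  · intro x hx
    exact ⟨φ i j x, h x hx, phi_invol i j x⟩

lemma phi_e (a b s : Fin 3) : φ a b (e s) = e s := by
  ext t <;> simp [φ, e]

lemma phi_ee (a b s u : Fin 3) : φ a b (e s + e u) = e s + e u := by
  ext t <;> simp [φ, e]

lemma phi_mem (a b : Fin 3) (L : AddSubgroup A) (S : Set A)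
    (hLS : L = AddSubgroup.closure S) (hgen : ∀ x ∈ S, φ a b x ∈ L) :
    ∀ x ∈ L, φ a b x ∈ L := by
  subst hLS
  intro x hx
  refine AddSubgroup.closure_induction hgen ?_ ?_ ?_ hx
  · show φ a b 0 ∈ _; simp [φ]; exact zero_mem _
  · intro x y _ _ hx hy
    have : φ a b (x + y) = φ a b x + φ a b y := (Φ a b).map_add x y
    rw [this]; exact add_mem hx hy
  · intro x _ hx
    have : φ a b (-x) = -(φ a b x) := (Φ a b).map_neg x
    rw [this]; exact neg_mem hx

theorem stmt_11 (i j k : Fin 3) (hij : i ≠ j) (hjk : j ≠ k) (hik : i ≠ k) :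
    φ i j '' ((AddSubgroup.closure {e i + e j, m i + m j, e k} : AddSubgroup A) : Set A) =
      ((AddSubgroup.closure {e i + e j, m i + m j, e k} : AddSubgroup A) : Set A) ∧
    φ j k '' ((AddSubgroup.closure {e i + e j, m i + m j, e k} : AddSubgroup A) : Set A) =
      ((AddSubgroup.closure {e i + e j, m i + m j, e k} : AddSubgroup A) : Set A) ∧
    φ i k '' ((AddSubgroup.closure {e i + e j, m i + m j, e k} : AddSubgroup A) : Set A) =
      ((AddSubgroup.closure {e i + e j, m i + m j, e k} : AddSubgroup A) : Set A) := by
  set L : AddSubgroup A := AddSubgroup.closure {e i + e j, m i + m j, e k} with hL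
  have h1 : e i + e j ∈ L := AddSubgroup.subset_closure (by simp)
  have h2 : m i + m j ∈ L := AddSubgroup.subset_closure (by simp)
  have h3 : e k ∈ L := AddSubgroup.subset_closure (by simp)
  have hm1 : φ i j (m i + m j) = (e i + e j) + (m i + m j) := by
    ext t <;> simp [φ, e, m, Pi.single_apply, hij, hij.symm] <;> ring
  have hm2 : φ j k (m i + m j) = e k + (m i + m j) := by
    ext t <;> simp [φ, e, m, Pi.single_apply, hij, hjk, hik, hij.symm, hjk.symm, hik.symm] <;> ring
  have hm3 : φ i k (m i + m j) = e k + (m i + m j) := by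
    ext t <;> simp [φ, e, m, Pi.single_apply, hij, hjk, hik, hij.symm, hjk.symm, hik.symm] <;> ring
  have gen : ∀ a b : Fin 3, φ a b (m i + m j) ∈ L →
      ∀ x ∈ ({e i + e j, m i + m j, e k} : Set A), φ a b x ∈ L := by
    intro a b hm x hx
    rcases hx with rfl | rfl | rfl
    · rw [phi_ee]; exact h1
    · exact hm
    · rw [phi_e]; exact h3
  refine ⟨?_, ?_, ?_⟩
  · exact phi_image_eq _ _ _ (phi_mem _ _ _ _ hL (gen i j (hm1 ▸ add_mem h1 h2)))
  · exact phi_image_eq _ _ _ (phi_mem _ _ _ _ hL (gen j k (hm2 ▸ add_mem h3 h2)))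
  · exact phi_image_eq _ _ _ (phi_mem _ _ _ _ hL (gen i k (hm3 ▸ add_mem h3 h2)))
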